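/- Let A be an n×n matrix over ZMod 2 that is symmetric, and let p ≠ q be two indices with A p q = 1. Let A' be the (n+1)×(n+1) block matrix A' = fromBlocks 1 r c (A + E_{pp} + E_{qq} + E_{pq} + E_{qp}), where r is the row vector e_p + e_q and c is the column vector e_p + e_q. (A' is the mod-2 intersection matrix after blowing up at the intersection point of E_p and E_q.) Then rank A' = rank A + 1; equivalently, the corank is preserved: (n+1) − rank A' = n − rank A. -/

import Mathlib

open Matrix

section Aux

variable {K : Type*} [Field K]

/-- The product of two submodules is linearly equivalent to the product type. -/
def submoduleProdEquiv {R M M₂ : Type*} [Ring R] [AddCommGroup M] [AddCommGroup M₂]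
    [Module R M] [Module R M₂] (p : Submodule R M) (q : Submodule R M₂) :
    (p.prod q) ≃ₗ[R] p × q where
  toFun x := (⟨x.1.1, x.2.1⟩, ⟨x.1.2, x.2.2⟩)
  invFun x := ⟨(x.1.1, x.2.1), ⟨x.1.2, x.2.2⟩⟩
  map_add' _ _ := rfl
  map_smul' _ _ := rfl
  left_inv _ := rfl
  right_inv _ := rfl

lemma finrank_submodule_prod {R M M₂ : Type*} [Field R] [AddCommGroup M] [AddCommGroup M₂]
    [Module R M] [Module R M₂] [FiniteDimensional R M] [FiniteDimensional R M₂]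
    (p : Submodule R M) (q : Submodule R M₂) :
    Module.finrank R (p.prod q) = Module.finrank R p + Module.finrank R q := by
  rw [(submoduleProdEquiv p q).finrank_eq, Module.finrank_prod]

lemma range_prodMap {R M M₂ M₃ M₄ : Type*} [Ring R] [AddCommGroup M] [AddCommGroup M₂]
    [AddCommGroup M₃] [AddCommGroup M₄] [Module R M] [Module R M₂] [Module R M₃] [Module R M₄]
    (f : M →ₗ[R] M₂) (g : M₃ →ₗ[R] M₄) :
    LinearMap.range (f.prodMap g) = (LinearMap.range f).prod (LinearMap.range g) := by
  ext ⟨a, b⟩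
  simp only [LinearMap.mem_range, Submodule.mem_prod, LinearMap.prodMap_apply, Prod.mk.injEq,
    Prod.exists]
  constructor
  · rintro ⟨x, y, hx, hy⟩
    exact ⟨⟨x, hx⟩, ⟨y, hy⟩⟩
  · rintro ⟨⟨x, hx⟩, ⟨y, hy⟩⟩
    exact ⟨x, y, hx, hy⟩

/-- The rank of a block-diagonal 2×2 block matrix is the sum of the ranks of the blocks. -/
lemma rank_fromBlocks_diag {m l : Type*} [Fintype m] [Fintype l] [DecidableEq m] [DecidableEq l]
    (B : Matrix m m K) (D : Matrix l l K) :
    (fromBlocks B 0 0 D).rank = B.rank + D.rank := by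
  let e := LinearEquiv.sumArrowLequivProdArrow m l K K
  have hcomp : (fromBlocks B 0 0 D).mulVecLin
      = (e.symm.toLinearMap ∘ₗ (B.mulVecLin.prodMap D.mulVecLin)) ∘ₗ e.toLinearMap := by
    apply LinearMap.ext
    intro v
    have hv : v = Sum.elim (v ∘ Sum.inl) (v ∘ Sum.inr) := (Sum.elim_comp_inl_inr v).symm
    simp only [LinearMap.comp_apply, mulVecLin_apply]
    conv_lhs => rw [hv]
    rw [fromBlocks_mulVec]
    funext i
    cases i with
    | inl i =>
        simp [e, LinearEquiv.sumArrowLequivProdArrow, Equiv.sumArrowEquivProdArrow,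
          mulVecLin_apply]
    | inr i =>
        simp [e, LinearEquiv.sumArrowLequivProdArrow, Equiv.sumArrowEquivProdArrow,
          mulVecLin_apply]
  rw [Matrix.rank, hcomp, LinearMap.range_comp, LinearEquiv.range, Submodule.map_top,
    LinearMap.range_comp, LinearEquiv.finrank_map_eq, range_prodMap, finrank_submodule_prod]
  rfl

end Aux

/-- Blowing up at the intersection point of two exceptional curves `E_p` and `E_q`
increases the rank of the mod-2 intersection matrix by exactly one, hence preserves
the corank. -/
theorem blowup_on_two_curves_rank {n : ℕ} (A : Matrix (Fin n) (Fin n) (ZMod 2))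
    (hA : A.IsSymm) (p q : Fin n) (hpq : p ≠ q) (hApq : A p q = 1) :
    (Matrix.fromBlocks (1 : Matrix (Fin 1) (Fin 1) (ZMod 2))
      (Matrix.of fun _ j => (Pi.single p 1 : Fin n → ZMod 2) j + (Pi.single q 1 : Fin n → ZMod 2) j)
      (Matrix.of fun i _ => (Pi.single p 1 : Fin n → ZMod 2) i + (Pi.single q 1 : Fin n → ZMod 2) i)
      (A + Matrix.single p p 1 + Matrix.single q q 1
         + Matrix.single p q 1 + Matrix.single q p 1)).rank
      = A.rank + 1 := by
  set B : Matrix (Fin 1) (Fin n) (ZMod 2) :=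
    Matrix.of fun _ j => (Pi.single p 1 : Fin n → ZMod 2) j + (Pi.single q 1 : Fin n → ZMod 2) j
  set C : Matrix (Fin n) (Fin 1) (ZMod 2) :=
    Matrix.of fun i _ => (Pi.single p 1 : Fin n → ZMod 2) i + (Pi.single q 1 : Fin n → ZMod 2) i
  set D : Matrix (Fin n) (Fin n) (ZMod 2) :=
    A + Matrix.single p p 1 + Matrix.single q q 1
      + Matrix.single p q 1 + Matrix.single q p 1
  letI : Invertible (1 : Matrix (Fin 1) (Fin 1) (ZMod 2)) := invertibleOne
  have hqp : q ≠ p := Ne.symm hpq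
  have hstd : ∀ a b i j : Fin n, Matrix.single a b (1 : ZMod 2) i j
      = (Pi.single a 1 : Fin n → ZMod 2) i * (Pi.single b 1 : Fin n → ZMod 2) j := by
    intro a b i j
    rcases eq_or_ne i a with rfl | h1 <;> rcases eq_or_ne j b with rfl | h2 <;>
      simp_all [Matrix.single, Pi.single_apply, eq_comm]
  have hCB : C * B = Matrix.single p p 1 + Matrix.single q q 1
      + Matrix.single p q 1 + Matrix.single q p 1 := by
    ext i j
    simp only [Matrix.mul_apply, Fin.sum_univ_one, Matrix.of_apply,
      Matrix.add_apply, hstd, B, C]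
    ring
  have hSchur : D - C * ⅟(1 : Matrix (Fin 1) (Fin 1) (ZMod 2)) * B = A := by
    rw [invOf_one, Matrix.mul_one, hCB]
    simp only [D]
    abel
  have hdetL : IsUnit (Matrix.fromBlocks (1 : Matrix (Fin 1) (Fin 1) (ZMod 2)) 0
      (C * ⅟(1 : Matrix (Fin 1) (Fin 1) (ZMod 2))) 1).det := by
    rw [Matrix.det_fromBlocks_zero₁₂]
    simp
  have hdetR : IsUnit (Matrix.fromBlocks (1 : Matrix (Fin 1) (Fin 1) (ZMod 2))
      (⅟(1 : Matrix (Fin 1) (Fin 1) (ZMod 2)) * B) 0 1).det := by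
    rw [Matrix.det_fromBlocks_zero₂₁]
    simp
  rw [Matrix.fromBlocks_eq_of_invertible₁₁ (1 : Matrix (Fin 1) (Fin 1) (ZMod 2)) B C D,
    Matrix.rank_mul_eq_left_of_isUnit_det _ _ hdetR,
    Matrix.rank_mul_eq_right_of_isUnit_det _ _ hdetL, hSchur,
    rank_fromBlocks_diag, Matrix.rank_one]
  simp [add_comm]
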